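/- Let (X,σ) be a magnetic graph with σ taking values in S¹_p, X̂ its lift, and 𝒞: AE(X̂) → AE_σ(X) the compression map. Then for every magnetic molecule m^σ ∈ AE_σ(X), ‖m^σ‖_{AE_σ} = min{ ‖m‖_{AE} : m ∈ AE(X̂), 𝒞m = m^σ }, and in particular the minimum is attained. -/

import Mathlib

namespace MagneticGraph

variable {V : Type*}

/-- `σ` is a signature on `G`: unimodular on edges and conjugate-symmetric. -/
def IsSignature (G : SimpleGraph V) (σ : V → V → ℂ) : Prop :=
  ∀ u v, G.Adj u v → ‖σ u v‖ = 1 ∧ σ v u = starRingEnd ℂ (σ u v)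

/-- Product of the signature along (the darts of) a walk. -/
def sigProd {G : SimpleGraph V} (σ : V → V → ℂ) {u v : V} (w : G.Walk u v) : ℂ :=
  (w.darts.map fun d => σ d.toProd.1 d.toProd.2).prod

/-- `(X,σ)` is unbalanced: some directed cycle has signature product `≠ 1`. -/
def Unbalanced (G : SimpleGraph V) (σ : V → V → ℂ) : Prop :=
  ∃ (u : V) (w : G.Walk u u), w.IsCycle ∧ sigProd σ w ≠ 1

/-- `(X,σ)` is balanced: every directed cycle has signature product `1`. -/
def Balanced (G : SimpleGraph V) (σ : V → V → ℂ) : Prop :=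
  ∀ (u : V) (w : G.Walk u u), w.IsCycle → sigProd σ w = 1

/-- The σ-Lipschitz (semi)norm `max_{u∼v} |f(u) - σ_{uv} f(v)|`. -/
noncomputable def lipNorm (G : SimpleGraph V) (σ : V → V → ℂ) (f : V → ℂ) : ℝ :=
  sSup {r : ℝ | ∃ u v, G.Adj u v ∧ r = ‖f u - σ u v * f v‖}

/-- The magnetic atom `m^σ_{uv} = δ_u - σ_{uv} δ_v`. -/
def atom [DecidableEq V] (σ : V → V → ℂ) (u v : V) : V → ℂ :=
  fun w => (if w = u then (1 : ℂ) else 0) - σ u v * (if w = v then (1 : ℂ) else 0)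

/-- Membership in the magnetic Arens–Eells space: a finite linear combination of atoms. -/
def InAE [DecidableEq V] (G : SimpleGraph V) (σ : V → V → ℂ) (m : V → ℂ) : Prop :=
  ∃ (n : ℕ) (a : Fin n → ℂ) (p q : Fin n → V),
    (∀ i, G.Adj (p i) (q i)) ∧ m = ∑ i, a i • atom σ (p i) (q i)

/-- The magnetic Arens–Eells norm: infimum of `Σ|aᵢ|` over representations by atoms. -/
noncomputable def aeNorm [DecidableEq V] (G : SimpleGraph V) (σ : V → V → ℂ) (m : V → ℂ) : ℝ :=
  sInf {s : ℝ | ∃ (n : ℕ) (a : Fin n → ℂ) (p q : Fin n → V),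
    (∀ i, G.Adj (p i) (q i)) ∧ m = ∑ i, a i • atom σ (p i) (q i) ∧
    s = ∑ i, ‖a i‖}

/-- The lift graph of `(X,σ)` on vertex set `V × S¹_p`: `(u,ω) ∼ (v,ω')` iff
`u ∼ v` and `ω' = ω σ_{uv}`. -/
def liftGraph (G : SimpleGraph V) (σ : V → V → ℂ) (p : ℕ) :
    SimpleGraph (V × rootsOfUnity p ℂ) :=
  SimpleGraph.fromRel fun a b =>
    G.Adj a.1 b.1 ∧ ((b.2 : ℂˣ) : ℂ) = ((a.2 : ℂˣ) : ℂ) * σ a.1 b.1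

/-- The trivial signature. -/
def triv {W : Type*} : W → W → ℂ := fun _ _ => 1

/-- The compression map `(𝒞 m)(u) = Σ_{ξ ∈ S¹_p} ξ · m(u,ξ)`. -/
noncomputable def compress {V : Type*} (p : ℕ) [NeZero p] (m : V × rootsOfUnity p ℂ → ℂ) : V → ℂ :=
  haveI : Fintype (rootsOfUnity p ℂ) := Fintype.ofFinite _
  fun u => ∑ ξ : rootsOfUnity p ℂ, ((ξ : ℂˣ) : ℂ) * m (u, ξ)

noncomputable instance rouFintype (p : ℕ) [NeZero p] : Fintype (rootsOfUnity p ℂ) := Fintype.ofFinite _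

section Stmt11Aux

variable {V : Type*} [Fintype V] [DecidableEq V]

omit [Fintype V] [DecidableEq V] in
lemma compress_sum (p : ℕ) [NeZero p] {ι : Type*} (s : Finset ι)
    (a : ι → ℂ) (F : ι → (V × rootsOfUnity p ℂ → ℂ)) :
    compress p (∑ i ∈ s, a i • F i) = ∑ i ∈ s, a i • compress p (F i) := by
  funext u
  simp only [compress, Finset.sum_apply, Pi.smul_apply, smul_eq_mul, Finset.mul_sum]
  rw [Finset.sum_comm]
  exact Finset.sum_congr rfl fun i _ => Finset.sum_congr rfl fun ξ _ => by ring

lemma absval_rou {p : ℕ} [NeZero p] (ξ : rootsOfUnity p ℂ) :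
    ‖((ξ : ℂˣ) : ℂ)‖ = 1 := by
  have h : (((ξ : ℂˣ) : ℂ)) ^ p = 1 := by
    have h2 := ξ.2
    rw [mem_rootsOfUnity] at h2
    have h3 := congrArg (Units.val) h2
    push_cast at h3
    simpa using h3
  simpa using Complex.norm_eq_one_of_pow_eq_one h (NeZero.ne p)

omit [Fintype V] in
lemma compress_atom (σ : V → V → ℂ) (p : ℕ) [NeZero p]
    (x y : V × rootsOfUnity p ℂ)
    (h : ((y.2 : ℂˣ) : ℂ) = ((x.2 : ℂˣ) : ℂ) * σ x.1 y.1) :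
    compress p (atom triv x y) = ((x.2 : ℂˣ) : ℂ) • atom σ x.1 y.1 := by
  funext w
  have key : ∀ (u : V) (ζ : rootsOfUnity p ℂ),
      (∑ η : rootsOfUnity p ℂ, ((η : ℂˣ) : ℂ) * (if (w, η) = (u, ζ) then (1:ℂ) else 0))
        = if w = u then ((ζ : ℂˣ) : ℂ) else 0 := by
    intro u ζ
    by_cases hw : w = u
    · subst hw
      simp [Prod.ext_iff, Finset.sum_ite_eq', mul_ite]
    · simp [Prod.ext_iff, hw]
  simp only [compress, atom, triv, one_mul, Pi.smul_apply, smul_eq_mul, mul_sub,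
    Finset.sum_sub_distrib]
  rw [show x = (x.1, x.2) from rfl, show y = (y.1, y.2) from rfl]
  rw [key x.1 x.2, key y.1 y.2]
  by_cases h1 : w = x.1 <;> by_cases h2 : w = y.1
  · have hxy : x.1 = y.1 := h1.symm.trans h2
    rw [hxy] at h
    simp [h1, h2, hxy, h]
  · have hxy : x.1 ≠ y.1 := fun hc => h2 (h1.trans hc)
    simp [h1, h2, hxy]
  · simp [h1, h2, h]
  · simp [h1, h2]

omit [Fintype V] [DecidableEq V] in
lemma lift_adj {G : SimpleGraph V} {σ : V → V → ℂ} {p : ℕ} {u v : V}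
    {ξ ξ' : rootsOfUnity p ℂ} (h : G.Adj u v)
    (hx : ((ξ' : ℂˣ) : ℂ) = ((ξ : ℂˣ) : ℂ) * σ u v) :
    (liftGraph G σ p).Adj (u, ξ) (v, ξ') := by
  rw [liftGraph, SimpleGraph.fromRel_adj]
  exact ⟨fun hc => h.ne (congrArg Prod.fst hc), Or.inl ⟨h, hx⟩⟩

omit [Fintype V] [DecidableEq V] in
lemma lift_adj_elim {G : SimpleGraph V} {σ : V → V → ℂ} (hσ : IsSignature G σ) {p : ℕ}
    {x y : V × rootsOfUnity p ℂ} (h : (liftGraph G σ p).Adj x y) :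
    G.Adj x.1 y.1 ∧ ((y.2 : ℂˣ) : ℂ) = ((x.2 : ℂˣ) : ℂ) * σ x.1 y.1 := by
  rw [liftGraph, SimpleGraph.fromRel_adj] at h
  rcases h with ⟨hne, h | h⟩
  · exact h
  · obtain ⟨hadj, hx⟩ := h
    refine ⟨hadj.symm, ?_⟩
    have h1 := (hσ x.1 y.1 hadj.symm).1
    have h2 := (hσ x.1 y.1 hadj.symm).2
    rw [h2] at hx
    have hmul : (starRingEnd ℂ) (σ x.1 y.1) * σ x.1 y.1 = 1 := by
      rw [mul_comm, Complex.mul_conj, Complex.normSq_eq_norm_sq, h1]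
      norm_num
    calc ((y.2 : ℂˣ) : ℂ) = ((y.2 : ℂˣ) : ℂ) * ((starRingEnd ℂ) (σ x.1 y.1) * σ x.1 y.1) := by
          rw [hmul, mul_one]
      _ = (((y.2 : ℂˣ) : ℂ) * (starRingEnd ℂ) (σ x.1 y.1)) * σ x.1 y.1 := by ring
      _ = ((x.2 : ℂˣ) : ℂ) * σ x.1 y.1 := by rw [← hx]

lemma aeNorm_bddBelow (G : SimpleGraph V) (σ : V → V → ℂ) (m : V → ℂ) :
    BddBelow {s : ℝ | ∃ (n : ℕ) (a : Fin n → ℂ) (p q : Fin n → V),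
      (∀ i, G.Adj (p i) (q i)) ∧ m = ∑ i, a i • atom σ (p i) (q i) ∧
      s = ∑ i, ‖a i‖} := by
  refine ⟨0, ?_⟩
  rintro s ⟨n, a, p, q, -, -, rfl⟩
  exact Finset.sum_nonneg fun i _ => norm_nonneg _

lemma aeNorm_le_of_rep (G : SimpleGraph V) (σ : V → V → ℂ) {m : V → ℂ} {n : ℕ}
    (a : Fin n → ℂ) (pf qf : Fin n → V) (hadj : ∀ i, G.Adj (pf i) (qf i))
    (hrep : m = ∑ i, a i • atom σ (pf i) (qf i)) :
    aeNorm G σ m ≤ ∑ i, ‖a i‖ :=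
  csInf_le (aeNorm_bddBelow G σ m) ⟨n, a, pf, qf, hadj, hrep, rfl⟩

lemma group_rep (G : SimpleGraph V) (σ : V → V → ℂ) [DecidableRel G.Adj] (m : V → ℂ)
    {n : ℕ} (a : Fin n → ℂ) (pf qf : Fin n → V) (hadj : ∀ i, G.Adj (pf i) (qf i))
    (hrep : m = ∑ i, a i • atom σ (pf i) (qf i)) :
    ∃ c : {d : V × V // G.Adj d.1 d.2} → ℂ,
      m = ∑ e, c e • atom σ e.1.1 e.1.2 ∧
      ∑ e, ‖c e‖ ≤ ∑ i, ‖a i‖ := by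
  classical
  let g : Fin n → {d : V × V // G.Adj d.1 d.2} := fun i => ⟨(pf i, qf i), hadj i⟩
  refine ⟨fun e => ∑ i ∈ Finset.univ.filter (fun i => g i = e), a i, ?_, ?_⟩
  · rw [hrep, ← Finset.sum_fiberwise Finset.univ g (fun i => a i • atom σ (pf i) (qf i))]
    refine Finset.sum_congr rfl fun e _ => ?_
    rw [Finset.sum_smul]
    refine Finset.sum_congr rfl fun i hi => ?_
    have hgi : g i = e := (Finset.mem_filter.mp hi).2
    have h1 : pf i = e.1.1 := by rw [← hgi]
    have h2 : qf i = e.1.2 := by rw [← hgi]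
    rw [h1, h2]
  · calc ∑ e : {d : V × V // G.Adj d.1 d.2},
          ‖∑ i ∈ Finset.univ.filter (fun i => g i = e), a i‖
        ≤ ∑ e : {d : V × V // G.Adj d.1 d.2},
            ∑ i ∈ Finset.univ.filter (fun i => g i = e), ‖a i‖ :=
          Finset.sum_le_sum fun e _ => norm_sum_le _ _
      _ = ∑ i, ‖a i‖ :=
          Finset.sum_fiberwise Finset.univ g (fun i => ‖a i‖)

omit [DecidableEq V] in
lemma exists_min_general {ι : Type*} [Fintype ι] (A : ι → V → ℂ) (mσ : V → ℂ)
    (h : ∃ c : ι → ℂ, mσ = ∑ e, c e • A e) :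
    ∃ c : ι → ℂ, mσ = ∑ e, c e • A e ∧
      ∀ c' : ι → ℂ, mσ = ∑ e, c' e • A e →
        ∑ e, ‖c e‖ ≤ ∑ e, ‖c' e‖ := by
  obtain ⟨c0, hc0⟩ := h
  have hΦ : Continuous fun c : ι → ℂ => ∑ e, c e • A e := by
    apply continuous_finset_sum
    intro e _
    exact (continuous_apply e).smul continuous_const
  have hf : Continuous fun c : ι → ℂ => ∑ e, ‖c e‖ :=
    continuous_finset_sum _ fun e _ => continuous_norm.comp (continuous_apply e)
  have hf0 : 0 ≤ ∑ e, ‖c0 e‖ := Finset.sum_nonneg fun e _ => norm_nonneg _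
  have hKcl : IsClosed {c : ι → ℂ | (∑ e, c e • A e) = mσ ∧
      (∑ e, ‖c e‖) ≤ ∑ e, ‖c0 e‖} :=
    IsClosed.inter (isClosed_eq hΦ continuous_const) (isClosed_le hf continuous_const)
  have hKbd : Bornology.IsBounded {c : ι → ℂ | (∑ e, c e • A e) = mσ ∧
      (∑ e, ‖c e‖) ≤ ∑ e, ‖c0 e‖} := by
    apply (Metric.isBounded_closedBall (x := (0 : ι → ℂ)) (r := ∑ e, ‖c0 e‖)).subset
    rintro c ⟨-, hcf⟩
    rw [Metric.mem_closedBall, dist_zero_right]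
    rw [pi_norm_le_iff_of_nonneg hf0]
    intro e
    calc ‖c e‖ = ‖c e‖ := rfl
      _ ≤ ∑ e, ‖c e‖ :=
          Finset.single_le_sum (fun i _ => norm_nonneg _) (Finset.mem_univ e)
      _ ≤ ∑ e, ‖c0 e‖ := hcf
  have hK0 : c0 ∈ {c : ι → ℂ | (∑ e, c e • A e) = mσ ∧
      (∑ e, ‖c e‖) ≤ ∑ e, ‖c0 e‖} := ⟨hc0.symm, le_refl _⟩
  obtain ⟨c, hcK, hmin⟩ :=
    (Metric.isCompact_of_isClosed_isBounded hKcl hKbd).exists_isMinOn ⟨c0, hK0⟩ hf.continuousOn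
  have hmin' := isMinOn_iff.mp hmin
  refine ⟨c, hcK.1.symm, ?_⟩
  intro c' hc'
  by_cases h' : (∑ e, ‖c' e‖) ≤ ∑ e, ‖c0 e‖
  · exact hmin' c' ⟨hc'.symm, h'⟩
  · exact (hmin' c0 hK0).trans (le_of_not_ge h')

end Stmt11Aux

/-- `‖m^σ‖_{AE_σ} = min { ‖m‖_{AE} : 𝒞 m = m^σ }`, the minimum being
attained. -/
theorem stmt11 {V : Type*} [Fintype V] [DecidableEq V] (G : SimpleGraph V) (σ : V → V → ℂ)
    (p : ℕ) [NeZero p] (hσ : IsSignature G σ)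
    (hval : ∀ u v, G.Adj u v → σ u v ^ p = 1)
    (mσ : V → ℂ) (hmσ : InAE G σ mσ) :
    ∃ m : V × rootsOfUnity p ℂ → ℂ,
      InAE (liftGraph G σ p) triv m ∧ compress p m = mσ ∧
      aeNorm (liftGraph G σ p) triv m = aeNorm G σ mσ ∧
      ∀ m' : V × rootsOfUnity p ℂ → ℂ, InAE (liftGraph G σ p) triv m' →
        compress p m' = mσ → aeNorm G σ mσ ≤ aeNorm (liftGraph G σ p) triv m' := by
  classical
  -- the finite type of (directed) edges
  obtain ⟨n0, a0, p0, q0, hadj0, hrep0⟩ := hmσ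
  obtain ⟨c0, hc0, hc0le⟩ := group_rep G σ mσ a0 p0 q0 hadj0 hrep0
  obtain ⟨c, hc, hcmin⟩ :=
    exists_min_general (fun e : {d : V × V // G.Adj d.1 d.2} => atom σ e.1.1 e.1.2) mσ ⟨c0, hc0⟩
  -- roots of unity attached to edges
  have hne : ∀ e : {d : V × V // G.Adj d.1 d.2}, σ e.1.1 e.1.2 ≠ 0 := by
    intro e h0
    have h1 := (hσ e.1.1 e.1.2 e.2).1
    rw [h0] at h1
    simp at h1
  let ω : {d : V × V // G.Adj d.1 d.2} → rootsOfUnity p ℂ := fun e =>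
    ⟨Units.mk0 _ (hne e), by
      rw [mem_rootsOfUnity]
      exact Units.ext (by simpa using hval _ _ e.2)⟩
  have hω : ∀ e, ((ω e : ℂˣ) : ℂ) = σ e.1.1 e.1.2 := fun e => rfl
  -- the lifted molecule
  set m : V × rootsOfUnity p ℂ → ℂ :=
    ∑ e : {d : V × V // G.Adj d.1 d.2},
      c e • atom triv (e.1.1, (1 : rootsOfUnity p ℂ)) (e.1.2, ω e) with hmdef
  have hadjm : ∀ e : {d : V × V // G.Adj d.1 d.2},
      (liftGraph G σ p).Adj (e.1.1, (1 : rootsOfUnity p ℂ)) (e.1.2, ω e) := fun e =>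
    lift_adj e.2 (by rw [hω]; simp)
  have hcomp : ∀ e : {d : V × V // G.Adj d.1 d.2},
      compress p (atom triv (e.1.1, (1 : rootsOfUnity p ℂ)) (e.1.2, ω e))
        = atom σ e.1.1 e.1.2 := by
    intro e
    have h := compress_atom σ p (e.1.1, (1 : rootsOfUnity p ℂ)) (e.1.2, ω e)
      (by rw [hω]; simp)
    simpa using h
  have hcm : compress p m = mσ := by
    rw [hmdef, compress_sum, hc]
    exact Finset.sum_congr rfl fun e _ => by rw [hcomp e]
  -- Fin-indexed representation of `m`
  let eqv := (Fintype.equivFin {d : V × V // G.Adj d.1 d.2}).symm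
  have hInAE : InAE (liftGraph G σ p) triv m := by
    refine ⟨Fintype.card {d : V × V // G.Adj d.1 d.2}, fun i => c (eqv i),
      fun i => ((eqv i).1.1, (1 : rootsOfUnity p ℂ)), fun i => ((eqv i).1.2, ω (eqv i)),
      fun i => hadjm (eqv i), ?_⟩
    rw [hmdef]
    exact (Equiv.sum_comp eqv
      (fun e => c e • atom triv (e.1.1, (1 : rootsOfUnity p ℂ)) (e.1.2, ω e))).symm
  -- the general lower bound
  have hlow : ∀ m' : V × rootsOfUnity p ℂ → ℂ, InAE (liftGraph G σ p) triv m' →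
      compress p m' = mσ → aeNorm G σ mσ ≤ aeNorm (liftGraph G σ p) triv m' := by
    rintro m' ⟨n, b, P, Q, hadj', hrep'⟩ hcomp'
    refine le_csInf ⟨∑ i, ‖b i‖, n, b, P, Q, hadj', hrep', rfl⟩ ?_
    rintro s ⟨n', b', P', Q', hadj'', hrep'', rfl⟩
    have key : mσ = ∑ j, (b' j * (((P' j).2 : ℂˣ) : ℂ)) • atom σ (P' j).1 (Q' j).1 := by
      rw [← hcomp', hrep'', compress_sum]
      refine Finset.sum_congr rfl fun j _ => ?_
      rw [compress_atom σ p (P' j) (Q' j) (lift_adj_elim hσ (hadj'' j)).2, smul_smul]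
    have hle := aeNorm_le_of_rep G σ (fun j => b' j * (((P' j).2 : ℂˣ) : ℂ))
      (fun j => (P' j).1) (fun j => (Q' j).1)
      (fun j => (lift_adj_elim hσ (hadj'' j)).1) key
    calc aeNorm G σ mσ ≤ ∑ j, ‖b' j * (((P' j).2 : ℂˣ) : ℂ)‖ := hle
      _ = ∑ j, ‖b' j‖ := by
          refine Finset.sum_congr rfl fun j _ => ?_
          rw [norm_mul, absval_rou, mul_one]
  -- the norm of mσ equals the optimal grouped sum
  have h2 : aeNorm G σ mσ = ∑ e, ‖c e‖ := by
    refine le_antisymm ?_ ?_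
    · have hrepE : mσ = ∑ i, c (eqv i) • atom σ (eqv i).1.1 (eqv i).1.2 := by
        rw [hc]
        exact (Equiv.sum_comp eqv (fun e => c e • atom σ e.1.1 e.1.2)).symm
      have := aeNorm_le_of_rep G σ (fun i => c (eqv i)) (fun i => (eqv i).1.1)
        (fun i => (eqv i).1.2) (fun i => (eqv i).2) hrepE
      calc aeNorm G σ mσ ≤ ∑ i, ‖c (eqv i)‖ := this
        _ = ∑ e, ‖c e‖ := Equiv.sum_comp eqv (fun e => ‖c e‖)
    · refine le_csInf ⟨∑ i, ‖a0 i‖, n0, a0, p0, q0, hadj0, hrep0, rfl⟩ ?_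
      rintro s ⟨n', a', p', q', hadj', hrep', rfl⟩
      obtain ⟨c', hc', hle'⟩ := group_rep G σ mσ a' p' q' hadj' hrep'
      exact (hcmin c' hc').trans hle'
  -- the norm of m is at most the optimal sum
  have h1 : aeNorm (liftGraph G σ p) triv m ≤ ∑ e, ‖c e‖ := by
    have hrepm : m = ∑ i, c (eqv i) •
        atom triv ((eqv i).1.1, (1 : rootsOfUnity p ℂ)) ((eqv i).1.2, ω (eqv i)) := by
      rw [hmdef]
      exact (Equiv.sum_comp eqv
        (fun e => c e • atom triv (e.1.1, (1 : rootsOfUnity p ℂ)) (e.1.2, ω e))).symm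
    have := aeNorm_le_of_rep (liftGraph G σ p) triv (fun i => c (eqv i))
      (fun i => ((eqv i).1.1, (1 : rootsOfUnity p ℂ))) (fun i => ((eqv i).1.2, ω (eqv i)))
      (fun i => hadjm (eqv i)) hrepm
    calc aeNorm (liftGraph G σ p) triv m ≤ ∑ i, ‖c (eqv i)‖ := this
      _ = ∑ e, ‖c e‖ := Equiv.sum_comp eqv (fun e => ‖c e‖)
  refine ⟨m, hInAE, hcm, le_antisymm (h1.trans h2.ge) (hlow m hInAE hcm), hlow⟩

end MagneticGraph
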